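/- Let N ≥ 5 and assume moreover that {·,·}_{C2N} and {·,·}_{S2} each satisfy the Jacobi identity on F = ℝ(B_1,…,B_N). Then for every λ ∈ ℝ the bracket {f,g}_λ := {f,g}_{C2N} + λ·{f,g}_{S2} satisfies the Jacobi identity: {{f,g}_λ, h}_λ + {{g,h}_λ, f}_λ + {{h,f}_λ, g}_λ = 0 for all f, g, h ∈ F. -/

import Mathlib

noncomputable section

/-- The field `F = ℝ(B_1, …, B_N)` of rational functions in `N` variables
indexed by `ZMod N` (indices read modulo `N`). -/
abbrev RatF (N : ℕ) : Type := FractionRing (MvPolynomial (ZMod N) ℝ)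

/-- The generator `B_i` of `ℝ(B_1, …, B_N)`. -/
noncomputable def Bgen (N : ℕ) (i : ZMod N) : RatF N :=
  algebraMap (MvPolynomial (ZMod N) ℝ) (RatF N) (MvPolynomial.X i)

namespace LambdaAux

variable {N : ℕ}

lemma Bgen_ne_zero (N : ℕ) (i : ZMod N) : Bgen N i ≠ 0 := by
  unfold Bgen
  simp [IsFractionRing.to_map_eq_zero_iff, MvPolynomial.X_ne_zero]

/-- Bundled antisymmetric biderivation. -/
structure BD (N : ℕ) (b : RatF N → RatF N → RatF N) : Prop where
  add : ∀ x y z : RatF N, b (x + y) z = b x z + b y z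
  smul : ∀ (c : ℝ) (x y : RatF N), b (c • x) y = c • b x y
  anti : ∀ x y : RatF N, b x y = - b y x
  leib : ∀ x y z : RatF N, b (x * y) z = x * b y z + y * b x z

namespace BD

variable {b : RatF N → RatF N → RatF N}

lemma zero_left (hb : BD N b) (z : RatF N) : b 0 z = 0 := by
  have h := hb.add 0 0 z
  simp only [add_zero] at h
  exact (left_eq_add.mp h)

lemma zero_right (hb : BD N b) (z : RatF N) : b z 0 = 0 := by
  rw [hb.anti, hb.zero_left, neg_zero]

lemma neg_left (hb : BD N b) (x z : RatF N) : b (-x) z = - b x z := by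
  have h := hb.add x (-x) z
  simp only [add_neg_cancel, hb.zero_left] at h
  linear_combination -h

lemma sub_left (hb : BD N b) (x y z : RatF N) : b (x - y) z = b x z - b y z := by
  rw [sub_eq_add_neg, hb.add, hb.neg_left, sub_eq_add_neg]

lemma add_right (hb : BD N b) (x y z : RatF N) : b z (x + y) = b z x + b z y := by
  rw [hb.anti, hb.add, hb.anti x z, hb.anti y z]; ring

lemma mul_right (hb : BD N b) (x y z : RatF N) : b z (x * y) = x * b z y + y * b z x := by
  rw [hb.anti, hb.leib, hb.anti x z, hb.anti y z]; ring

lemma smul_right (hb : BD N b) (c : ℝ) (x z : RatF N) : b z (c • x) = c • b z x := by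
  rw [hb.anti, hb.smul, hb.anti x z, smul_neg, neg_neg]

lemma self (hb : BD N b) (x : RatF N) : b x x = 0 := by
  have h := hb.anti x x
  linear_combination (2:RatF N)⁻¹ * h

lemma one_left (hb : BD N b) (z : RatF N) : b 1 z = 0 := by
  have h := hb.leib 1 1 z
  simp only [mul_one, one_mul] at h
  linear_combination -h

lemma inv_left (hb : BD N b) {x : RatF N} (hx : x ≠ 0) (z : RatF N) :
    b x⁻¹ z = -(x⁻¹ * x⁻¹ * b x z) := by
  have h := hb.leib x x⁻¹ z
  rw [mul_inv_cancel₀ hx, hb.one_left] at h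
  have hxi : x * x⁻¹ = 1 := mul_inv_cancel₀ hx
  apply mul_left_cancel₀ hx
  linear_combination -h + (x⁻¹ * b x z) * hxi

lemma alg_left (hb : BD N b) (c : ℝ) (x z : RatF N) :
    b (algebraMap ℝ (RatF N) c * x) z = algebraMap ℝ (RatF N) c * b x z := by
  rw [← Algebra.smul_def, hb.smul, Algebra.smul_def]

end BD

/-- Mixed Jacobiator of two brackets. -/
def MixJ (bC bS : RatF N → RatF N → RatF N) (f g h : RatF N) : RatF N :=
  bC (bS f g) h + bS (bC f g) h + bC (bS g h) f + bS (bC g h) f +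
    bC (bS h f) g + bS (bC h f) g

variable {bC bS : RatF N → RatF N → RatF N}

lemma MixJ_cyc (f g h : RatF N) : MixJ bC bS f g h = MixJ bC bS h f g := by
  unfold MixJ; ring

lemma MixJ_swap (hC : BD N bC) (hS : BD N bS) (f g h : RatF N) :
    MixJ bC bS f g h = - MixJ bC bS g f h := by
  unfold MixJ
  rw [hS.anti g f, hC.anti g f, hS.anti f h, hC.anti f h, hS.anti h g, hC.anti h g,
    hC.neg_left, hS.neg_left, hC.neg_left, hS.neg_left, hC.neg_left, hS.neg_left]
  ring

lemma MixJ_eq12 (hC : BD N bC) (hS : BD N bS) (f h : RatF N) :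
    MixJ bC bS f f h = 0 := by
  unfold MixJ
  rw [hS.self, hC.self, hC.zero_left, hS.zero_left, hS.anti h f, hC.anti h f,
    hC.neg_left, hS.neg_left]
  ring

lemma MixJ_add1 (hC : BD N bC) (hS : BD N bS) (x y g h : RatF N) :
    MixJ bC bS (x + y) g h = MixJ bC bS x g h + MixJ bC bS y g h := by
  unfold MixJ
  simp only [hS.add, hC.add, hS.add_right, hC.add_right]
  ring

lemma MixJ_smul1 (hC : BD N bC) (hS : BD N bS) (c : ℝ) (x g h : RatF N) :
    MixJ bC bS (c • x) g h = c • MixJ bC bS x g h := by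
  unfold MixJ
  simp only [hS.smul, hC.smul, hS.smul_right, hC.smul_right, smul_add]

lemma MixJ_mul1 (hC : BD N bC) (hS : BD N bS) (x y g h : RatF N) :
    MixJ bC bS (x * y) g h = x * MixJ bC bS y g h + y * MixJ bC bS x g h := by
  unfold MixJ
  simp only [hC.leib, hS.leib, hC.mul_right, hS.mul_right, hC.add, hS.add]
  simp only [hC.anti h y, hC.anti h x, hS.anti h y, hS.anti h x, hC.neg_left,
    hS.neg_left, mul_neg, neg_mul]
  ring

/-- A derivation vanishing on the generators vanishes. -/
lemma der_zero (D : RatF N → RatF N)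
    (hadd : ∀ x y, D (x + y) = D x + D y)
    (hsmul : ∀ (c : ℝ) x, D (c • x) = c • D x)
    (hleib : ∀ x y, D (x * y) = x * D y + y * D x)
    (hgen : ∀ i, D (Bgen N i) = 0) : ∀ z, D z = 0 := by
  have hone : D 1 = 0 := by
    have h := hleib 1 1
    simp only [mul_one, one_mul] at h
    linear_combination -h
  have hpoly : ∀ p : MvPolynomial (ZMod N) ℝ,
      D (algebraMap (MvPolynomial (ZMod N) ℝ) (RatF N) p) = 0 := by
    intro p
    induction p using MvPolynomial.induction_on with
    | C a =>
        have : algebraMap (MvPolynomial (ZMod N) ℝ) (RatF N) (MvPolynomial.C a)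
            = a • (1 : RatF N) := by
          rw [Algebra.smul_def, mul_one,
            IsScalarTower.algebraMap_eq ℝ (MvPolynomial (ZMod N) ℝ) (RatF N)]
          rfl
        rw [this, hsmul, hone, smul_zero]
    | add p q hp hq => rw [map_add, hadd, hp, hq, add_zero]
    | mul_X p i hp =>
        rw [map_mul, hleib, hp,
          show (algebraMap (MvPolynomial (ZMod N) ℝ) (RatF N)) (MvPolynomial.X i)
            = Bgen N i from rfl, hgen, mul_zero, mul_zero, add_zero]
  intro z
  obtain ⟨p, q, hq, h⟩ := IsFractionRing.div_surjective (A := MvPolynomial (ZMod N) ℝ) z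
  have hq0 : q ≠ 0 := nonZeroDivisors.ne_zero hq
  have hq0' : algebraMap (MvPolynomial (ZMod N) ℝ) (RatF N) q ≠ 0 := by
    simp [IsFractionRing.to_map_eq_zero_iff, hq0]
  have hzq : z * algebraMap (MvPolynomial (ZMod N) ℝ) (RatF N) q
      = algebraMap (MvPolynomial (ZMod N) ℝ) (RatF N) p := by
    rw [← h]; field_simp
  have h2 := hleib z (algebraMap (MvPolynomial (ZMod N) ℝ) (RatF N) q)
  rw [hzq, hpoly, hpoly] at h2
  have h3 : algebraMap (MvPolynomial (ZMod N) ℝ) (RatF N) q * D z = 0 := by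
    linear_combination -h2
  rcases mul_eq_zero.mp h3 with h4 | h4
  · exact absurd h4 hq0'
  · exact h4


/-- All the hypotheses of the main theorem bundled (except the Jacobi identities). -/
structure Setup (N : ℕ) (bC bS : RatF N → RatF N → RatF N) : Prop where
  hN : 5 ≤ N
  C : BD N bC
  S : BD N bS
  gen1 : ∀ k : ZMod N, bC (Bgen N k) (Bgen N (k + 1)) =
    Bgen N k * Bgen N (k + 1) - Bgen N k - Bgen N (k + 1)
  gen2 : ∀ k : ZMod N, bC (Bgen N k) (Bgen N (k + 2)) =
    - (Bgen N k * Bgen N (k + 2)) / Bgen N (k + 1)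
  gen0 : ∀ i j : ZMod N, j - i ≠ 1 → j - i ≠ -1 → j - i ≠ 2 → j - i ≠ -2 →
    bC (Bgen N i) (Bgen N j) = 0
  sgen : ∀ i j : ZMod N, bS (Bgen N i) (Bgen N j) =
    ((if i + 1 = j then (1 : ℝ) else 0) - (if i - 1 = j then (1 : ℝ) else 0)) •
      (Bgen N i * Bgen N j)

lemma zmod_ne0 (hN : 5 ≤ N) (m : ℕ) (h1 : 0 < m) (h2 : m ≤ 4) :
    ((m : ℕ) : ZMod N) ≠ 0 := by
  intro h
  have h3 : N ∣ m := (ZMod.natCast_eq_zero_iff m N).mp h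
  have := Nat.le_of_dvd h1 h3
  omega

lemma zn1 (hN : 5 ≤ N) : (1 : ZMod N) ≠ 0 := by
  have := zmod_ne0 hN 1 (by norm_num) (by norm_num); simpa using this

lemma zn2 (hN : 5 ≤ N) : (2 : ZMod N) ≠ 0 := by
  have := zmod_ne0 hN 2 (by norm_num) (by norm_num); simpa using this

lemma zn3 (hN : 5 ≤ N) : (3 : ZMod N) ≠ 0 := by
  have := zmod_ne0 hN 3 (by norm_num) (by norm_num); simpa using this

lemma zn4 (hN : 5 ≤ N) : (4 : ZMod N) ≠ 0 := by
  have := zmod_ne0 hN 4 (by norm_num) (by norm_num); simpa using this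

namespace Setup

variable {bC bS : RatF N → RatF N → RatF N}

lemma c1 (st : Setup N bC bS) (a b : ZMod N) (hb : b = a + 1) :
    bC (Bgen N a) (Bgen N b) = Bgen N a * Bgen N b - Bgen N a - Bgen N b := by
  subst hb; exact st.gen1 a

lemma c2 (st : Setup N bC bS) (a b m : ZMod N) (hb : b = a + 2) (hm : m = a + 1) :
    bC (Bgen N a) (Bgen N b) = - (Bgen N a * Bgen N b) / Bgen N m := by
  subst hb; subst hm; exact st.gen2 a

lemma c1' (st : Setup N bC bS) (a b : ZMod N) (hb : b = a - 1) :
    bC (Bgen N a) (Bgen N b) =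
      -(Bgen N b * Bgen N a - Bgen N b - Bgen N a) := by
  rw [st.C.anti, st.c1 b a (by rw [hb]; ring)]

lemma c2' (st : Setup N bC bS) (a b m : ZMod N) (hb : b = a - 2) (hm : m = a - 1) :
    bC (Bgen N a) (Bgen N b) = (Bgen N b * Bgen N a) / Bgen N m := by
  rw [st.C.anti, st.c2 b a m (by rw [hb]; ring) (by rw [hb, hm]; ring)]
  ring

lemma c0 (st : Setup N bC bS) (a b : ZMod N) (h1 : b - a ≠ 1) (h2 : b - a ≠ -1)
    (h3 : b - a ≠ 2) (h4 : b - a ≠ -2) :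
    bC (Bgen N a) (Bgen N b) = 0 := st.gen0 a b h1 h2 h3 h4

lemma s1 (st : Setup N bC bS) (a b : ZMod N) (hb : b = a + 1) :
    bS (Bgen N a) (Bgen N b) = Bgen N a * Bgen N b := by
  rw [st.sgen a b, if_pos hb.symm, if_neg, sub_zero, one_smul]
  intro h
  exact zn2 st.hN (by linear_combination -hb - h)

lemma s1' (st : Setup N bC bS) (a b : ZMod N) (hb : b = a - 1) :
    bS (Bgen N a) (Bgen N b) = -(Bgen N b * Bgen N a) := by
  rw [st.S.anti, st.s1 b a (by rw [hb]; ring)]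

lemma s0 (st : Setup N bC bS) (a b : ZMod N) (h1 : b ≠ a + 1) (h2 : b ≠ a - 1) :
    bS (Bgen N a) (Bgen N b) = 0 := by
  rw [st.sgen a b, if_neg (fun h => h1 h.symm), if_neg (fun h => h2 h.symm),
    sub_zero, zero_smul]

end Setup


namespace Setup

variable {bC bS : RatF N → RatF N → RatF N}

/-- Case A: triple `(a, a+1, a+2)`. -/
lemma caseA (st : Setup N bC bS) (a : ZMod N) :
    MixJ bC bS (Bgen N a) (Bgen N (a + 1)) (Bgen N (a + 2)) = 0 := by
  have hN := st.hN
  have n1 := zn1 hN; have n2 := zn2 hN; have n3 := zn3 hN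
  have hv_ab : bS (Bgen N a) (Bgen N (a+1)) = Bgen N a * Bgen N (a+1) := st.s1 a (a+1) rfl
  have hv_bc : bS (Bgen N (a+1)) (Bgen N (a+2)) = Bgen N (a+1) * Bgen N (a+2) :=
    st.s1 (a+1) (a+2) (by ring)
  have hv_ca : bS (Bgen N (a+2)) (Bgen N a) = 0 :=
    st.s0 (a+2) a (fun h => n3 (by linear_combination -h)) (fun h => n1 (by linear_combination -h))
  have hv_ba : bS (Bgen N (a+1)) (Bgen N a) = -(Bgen N a * Bgen N (a+1)) :=
    st.s1' (a+1) a (by ring)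
  have hv_cb : bS (Bgen N (a+2)) (Bgen N (a+1)) = -(Bgen N (a+1) * Bgen N (a+2)) :=
    st.s1' (a+2) (a+1) (by ring)
  have hv_ac : bS (Bgen N a) (Bgen N (a+2)) = 0 :=
    st.s0 a (a+2) (fun h => n1 (by linear_combination h)) (fun h => n3 (by linear_combination h))
  have hv_bb : bS (Bgen N (a+1)) (Bgen N (a+1)) = 0 := st.S.self _
  have hc_ab : bC (Bgen N a) (Bgen N (a+1)) =
      Bgen N a * Bgen N (a+1) - Bgen N a - Bgen N (a+1) := st.c1 a (a+1) rfl
  have hc_bc : bC (Bgen N (a+1)) (Bgen N (a+2)) =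
      Bgen N (a+1) * Bgen N (a+2) - Bgen N (a+1) - Bgen N (a+2) := st.c1 (a+1) (a+2) (by ring)
  have hc_ac : bC (Bgen N a) (Bgen N (a+2)) =
      -(Bgen N a * Bgen N (a+2)) / Bgen N (a+1) := st.c2 a (a+2) (a+1) rfl rfl
  have hc_ba : bC (Bgen N (a+1)) (Bgen N a) =
      -(Bgen N a * Bgen N (a+1) - Bgen N a - Bgen N (a+1)) := st.c1' (a+1) a (by ring)
  have hc_cb : bC (Bgen N (a+2)) (Bgen N (a+1)) =
      -(Bgen N (a+1) * Bgen N (a+2) - Bgen N (a+1) - Bgen N (a+2)) := st.c1' (a+2) (a+1) (by ring)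
  have hc_ca : bC (Bgen N (a+2)) (Bgen N a) =
      (Bgen N a * Bgen N (a+2)) / Bgen N (a+1) := st.c2' (a+2) a (a+1) (by ring) (by ring)
  have hinvC := st.C.inv_left (Bgen_ne_zero N (a+1))
  have hinvS := st.S.inv_left (Bgen_ne_zero N (a+1))
  unfold MixJ
  simp only [hv_ab, hv_bc, hv_ca, hv_ba, hv_cb, hv_ac, hv_bb, hc_ab, hc_bc, hc_ac,
    hc_ba, hc_cb, hc_ca]
  simp only [div_eq_mul_inv, st.C.neg_left, st.S.neg_left, st.C.leib, st.S.leib,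
    st.C.sub_left, st.S.sub_left, st.C.add, st.S.add, hinvC, hinvS,
    st.C.zero_left, st.S.zero_left]
  simp only [hv_ab, hv_bc, hv_ca, hv_ba, hv_cb, hv_ac, hv_bb, hc_ab, hc_bc, hc_ac,
    hc_ba, hc_cb, hc_ca]
  have hb1 := Bgen_ne_zero N (a+1)
  field_simp
  ring


/-- Case B (generic): triple `(a, a+1, a+3)` with `3 ≠ -2`. -/
lemma caseBfar (st : Setup N bC bS) (a : ZMod N) (hfar : (3 : ZMod N) ≠ -2) :
    MixJ bC bS (Bgen N a) (Bgen N (a + 1)) (Bgen N (a + 3)) = 0 := by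
  have hN := st.hN
  have n1 := zn1 hN; have n2 := zn2 hN; have n3 := zn3 hN; have n4 := zn4 hN
  have hv_fg : bS (Bgen N a) (Bgen N (a+1)) = Bgen N a * Bgen N (a+1) := st.s1 a (a+1) rfl
  have hc_fg : bC (Bgen N a) (Bgen N (a+1)) =
      Bgen N a * Bgen N (a+1) - Bgen N a - Bgen N (a+1) := st.c1 a (a+1) rfl
  have hv_gh : bS (Bgen N (a+1)) (Bgen N (a+3)) = 0 :=
    st.s0 (a+1) (a+3) (fun h => n1 (by linear_combination h)) (fun h => n3 (by linear_combination h))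
  have hc_gh : bC (Bgen N (a+1)) (Bgen N (a+3)) =
      -(Bgen N (a+1) * Bgen N (a+3)) / Bgen N (a+2) := st.c2 (a+1) (a+3) (a+2) (by ring) (by ring)
  have hv_hf : bS (Bgen N (a+3)) (Bgen N a) = 0 :=
    st.s0 (a+3) a (fun h => n4 (by linear_combination -h)) (fun h => n2 (by linear_combination -h))
  have hc_hf : bC (Bgen N (a+3)) (Bgen N a) = 0 :=
    st.c0 (a+3) a (fun h => n4 (by linear_combination -h)) (fun h => n2 (by linear_combination -h))
      (fun h => hfar (by linear_combination -h)) (fun h => n1 (by linear_combination -h))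
  have hc_fh : bC (Bgen N a) (Bgen N (a+3)) = 0 :=
    st.c0 a (a+3) (fun h => n2 (by linear_combination h)) (fun h => n4 (by linear_combination h))
      (fun h => n1 (by linear_combination h)) (fun h => hfar (by linear_combination h))
  have hv_fh : bS (Bgen N a) (Bgen N (a+3)) = 0 :=
    st.s0 a (a+3) (fun h => n2 (by linear_combination h)) (fun h => n4 (by linear_combination h))
  have hv_m1f : bS (Bgen N (a+2)) (Bgen N a) = 0 :=
    st.s0 (a+2) a (fun h => n3 (by linear_combination -h)) (fun h => n1 (by linear_combination -h))
  have hv_gf : bS (Bgen N (a+1)) (Bgen N a) = -(Bgen N a * Bgen N (a+1)) :=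
    st.s1' (a+1) a (by ring)
  have hinvC := st.C.inv_left (Bgen_ne_zero N (a+2))
  have hinvS := st.S.inv_left (Bgen_ne_zero N (a+2))
  unfold MixJ
  simp only [hv_fg, hc_fg, hv_gh, hc_gh, hv_hf, hc_hf, hc_fh, hv_fh, hv_m1f, hv_gf]
  simp only [div_eq_mul_inv, st.C.neg_left, st.S.neg_left, st.C.leib, st.S.leib,
    st.C.sub_left, st.S.sub_left, st.C.add, st.S.add, hinvC, hinvS,
    st.C.zero_left, st.S.zero_left]
  simp only [hv_fg, hc_fg, hv_gh, hc_gh, hv_hf, hc_hf, hc_fh, hv_fh, hv_m1f, hv_gf]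
  have hb1 := Bgen_ne_zero N (a+2)
  field_simp
  ring

/-- Case B for `N = 5` (i.e. `3 = -2`): triple `(a, a+1, a+3)`. -/
lemma caseB5 (st : Setup N bC bS) (a : ZMod N) (h3 : (3 : ZMod N) = -2) :
    MixJ bC bS (Bgen N a) (Bgen N (a + 1)) (Bgen N (a + 3)) = 0 := by
  have hN := st.hN
  have n1 := zn1 hN; have n2 := zn2 hN; have n3 := zn3 hN; have n4 := zn4 hN
  have hv_fg : bS (Bgen N a) (Bgen N (a+1)) = Bgen N a * Bgen N (a+1) := st.s1 a (a+1) rfl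
  have hc_fg : bC (Bgen N a) (Bgen N (a+1)) =
      Bgen N a * Bgen N (a+1) - Bgen N a - Bgen N (a+1) := st.c1 a (a+1) rfl
  have hv_gh : bS (Bgen N (a+1)) (Bgen N (a+3)) = 0 :=
    st.s0 (a+1) (a+3) (fun h => n1 (by linear_combination h)) (fun h => n3 (by linear_combination h))
  have hc_gh : bC (Bgen N (a+1)) (Bgen N (a+3)) =
      -(Bgen N (a+1) * Bgen N (a+3)) / Bgen N (a+2) := st.c2 (a+1) (a+3) (a+2) (by ring) (by ring)
  have hv_hf : bS (Bgen N (a+3)) (Bgen N a) = 0 :=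
    st.s0 (a+3) a (fun h => n4 (by linear_combination -h)) (fun h => n2 (by linear_combination -h))
  have hc_hf : bC (Bgen N (a+3)) (Bgen N a) =
      -(Bgen N (a+3) * Bgen N a) / Bgen N (a+4) :=
    st.c2 (a+3) a (a+4) (by linear_combination -h3) (by ring)
  have hc_fh : bC (Bgen N a) (Bgen N (a+3)) =
      (Bgen N (a+3) * Bgen N a) / Bgen N (a+4) :=
    st.c2' a (a+3) (a+4) (by linear_combination h3) (by linear_combination h3)
  have hv_fh : bS (Bgen N a) (Bgen N (a+3)) = 0 :=
    st.s0 a (a+3) (fun h => n2 (by linear_combination h)) (fun h => n4 (by linear_combination h))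
  have hv_m1f : bS (Bgen N (a+2)) (Bgen N a) = 0 :=
    st.s0 (a+2) a (fun h => n3 (by linear_combination -h)) (fun h => n1 (by linear_combination -h))
  have hv_gf : bS (Bgen N (a+1)) (Bgen N a) = -(Bgen N a * Bgen N (a+1)) :=
    st.s1' (a+1) a (by ring)
  have hv_m2g : bS (Bgen N (a+4)) (Bgen N (a+1)) = 0 :=
    st.s0 (a+4) (a+1) (fun h => n4 (by linear_combination -h)) (fun h => n2 (by linear_combination -h))
  have hv_hg : bS (Bgen N (a+3)) (Bgen N (a+1)) = 0 :=
    st.s0 (a+3) (a+1) (fun h => n3 (by linear_combination -h)) (fun h => n1 (by linear_combination -h))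
  have hinvC1 := st.C.inv_left (Bgen_ne_zero N (a+2))
  have hinvS1 := st.S.inv_left (Bgen_ne_zero N (a+2))
  have hinvC2 := st.C.inv_left (Bgen_ne_zero N (a+4))
  have hinvS2 := st.S.inv_left (Bgen_ne_zero N (a+4))
  unfold MixJ
  simp only [hv_fg, hc_fg, hv_gh, hc_gh, hv_hf, hc_hf, hc_fh, hv_fh, hv_m1f, hv_gf,
    hv_m2g, hv_hg]
  simp only [div_eq_mul_inv, st.C.neg_left, st.S.neg_left, st.C.leib, st.S.leib,
    st.C.sub_left, st.S.sub_left, st.C.add, st.S.add, hinvC1, hinvS1, hinvC2, hinvS2,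
    st.C.zero_left, st.S.zero_left]
  simp only [hv_fg, hc_fg, hv_gh, hc_gh, hv_hf, hc_hf, hc_fh, hv_fh, hv_m1f, hv_gf,
    hv_m2g, hv_hg]
  have hb1 := Bgen_ne_zero N (a+2)
  have hb2 := Bgen_ne_zero N (a+4)
  field_simp
  ring

lemma caseB (st : Setup N bC bS) (a : ZMod N) :
    MixJ bC bS (Bgen N a) (Bgen N (a + 1)) (Bgen N (a + 3)) = 0 := by
  by_cases h3 : (3 : ZMod N) = -2
  · exact st.caseB5 a h3
  · exact st.caseBfar a h3


/-- Case C (generic): triple `(a, a+2, a+3)` with `3 ≠ -2`. -/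
lemma caseCfar (st : Setup N bC bS) (a : ZMod N) (hfar : (3 : ZMod N) ≠ -2) :
    MixJ bC bS (Bgen N a) (Bgen N (a + 2)) (Bgen N (a + 3)) = 0 := by
  have hN := st.hN
  have n1 := zn1 hN; have n2 := zn2 hN; have n3 := zn3 hN; have n4 := zn4 hN
  have hv_fg : bS (Bgen N a) (Bgen N (a+2)) = 0 :=
    st.s0 a (a+2) (fun h => n1 (by linear_combination h)) (fun h => n3 (by linear_combination h))
  have hc_fg : bC (Bgen N a) (Bgen N (a+2)) =
      -(Bgen N a * Bgen N (a+2)) / Bgen N (a+1) := st.c2 a (a+2) (a+1) rfl rfl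
  have hv_gh : bS (Bgen N (a+2)) (Bgen N (a+3)) = Bgen N (a+2) * Bgen N (a+3) :=
    st.s1 (a+2) (a+3) (by ring)
  have hc_gh : bC (Bgen N (a+2)) (Bgen N (a+3)) =
      Bgen N (a+2) * Bgen N (a+3) - Bgen N (a+2) - Bgen N (a+3) := st.c1 (a+2) (a+3) (by ring)
  have hv_hf : bS (Bgen N (a+3)) (Bgen N a) = 0 :=
    st.s0 (a+3) a (fun h => n4 (by linear_combination -h)) (fun h => n2 (by linear_combination -h))
  have hc_hf : bC (Bgen N (a+3)) (Bgen N a) = 0 :=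
    st.c0 (a+3) a (fun h => n4 (by linear_combination -h)) (fun h => n2 (by linear_combination -h))
      (fun h => hfar (by linear_combination -h)) (fun h => n1 (by linear_combination -h))
  have hv_m1h : bS (Bgen N (a+1)) (Bgen N (a+3)) = 0 :=
    st.s0 (a+1) (a+3) (fun h => n1 (by linear_combination h)) (fun h => n3 (by linear_combination h))
  have hv_fh : bS (Bgen N a) (Bgen N (a+3)) = 0 :=
    st.s0 a (a+3) (fun h => n2 (by linear_combination h)) (fun h => n4 (by linear_combination h))
  have hc_gf : bC (Bgen N (a+2)) (Bgen N a) =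
      (Bgen N a * Bgen N (a+2)) / Bgen N (a+1) := st.c2' (a+2) a (a+1) (by ring) (by ring)
  have hv_gf : bS (Bgen N (a+2)) (Bgen N a) = 0 :=
    st.s0 (a+2) a (fun h => n3 (by linear_combination -h)) (fun h => n1 (by linear_combination -h))
  have hinvC := st.C.inv_left (Bgen_ne_zero N (a+1))
  have hinvS := st.S.inv_left (Bgen_ne_zero N (a+1))
  unfold MixJ
  simp only [hv_fg, hc_fg, hv_gh, hc_gh, hv_hf, hc_hf, hv_m1h, hv_fh, hc_gf, hv_gf]
  simp only [div_eq_mul_inv, st.C.neg_left, st.S.neg_left, st.C.leib, st.S.leib,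
    st.C.sub_left, st.S.sub_left, st.C.add, st.S.add, hinvC, hinvS,
    st.C.zero_left, st.S.zero_left]
  simp only [hv_fg, hc_fg, hv_gh, hc_gh, hv_hf, hc_hf, hv_m1h, hv_fh, hc_gf, hv_gf]
  have hb1 := Bgen_ne_zero N (a+1)
  field_simp
  ring

/-- Case C for `N = 5`: triple `(a, a+2, a+3)` with `3 = -2`. -/
lemma caseC5 (st : Setup N bC bS) (a : ZMod N) (h3 : (3 : ZMod N) = -2) :
    MixJ bC bS (Bgen N a) (Bgen N (a + 2)) (Bgen N (a + 3)) = 0 := by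
  have hN := st.hN
  have n1 := zn1 hN; have n2 := zn2 hN; have n3 := zn3 hN; have n4 := zn4 hN
  have hv_fg : bS (Bgen N a) (Bgen N (a+2)) = 0 :=
    st.s0 a (a+2) (fun h => n1 (by linear_combination h)) (fun h => n3 (by linear_combination h))
  have hc_fg : bC (Bgen N a) (Bgen N (a+2)) =
      -(Bgen N a * Bgen N (a+2)) / Bgen N (a+1) := st.c2 a (a+2) (a+1) rfl rfl
  have hv_gh : bS (Bgen N (a+2)) (Bgen N (a+3)) = Bgen N (a+2) * Bgen N (a+3) :=
    st.s1 (a+2) (a+3) (by ring)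
  have hc_gh : bC (Bgen N (a+2)) (Bgen N (a+3)) =
      Bgen N (a+2) * Bgen N (a+3) - Bgen N (a+2) - Bgen N (a+3) := st.c1 (a+2) (a+3) (by ring)
  have hv_hf : bS (Bgen N (a+3)) (Bgen N a) = 0 :=
    st.s0 (a+3) a (fun h => n4 (by linear_combination -h)) (fun h => n2 (by linear_combination -h))
  have hc_hf : bC (Bgen N (a+3)) (Bgen N a) =
      -(Bgen N (a+3) * Bgen N a) / Bgen N (a+4) :=
    st.c2 (a+3) a (a+4) (by linear_combination -h3) (by ring)
  have hv_m1h : bS (Bgen N (a+1)) (Bgen N (a+3)) = 0 :=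
    st.s0 (a+1) (a+3) (fun h => n1 (by linear_combination h)) (fun h => n3 (by linear_combination h))
  have hv_fh : bS (Bgen N a) (Bgen N (a+3)) = 0 :=
    st.s0 a (a+3) (fun h => n2 (by linear_combination h)) (fun h => n4 (by linear_combination h))
  have hc_gf : bC (Bgen N (a+2)) (Bgen N a) =
      (Bgen N a * Bgen N (a+2)) / Bgen N (a+1) := st.c2' (a+2) a (a+1) (by ring) (by ring)
  have hv_gf : bS (Bgen N (a+2)) (Bgen N a) = 0 :=
    st.s0 (a+2) a (fun h => n3 (by linear_combination -h)) (fun h => n1 (by linear_combination -h))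
  have hc_fh : bC (Bgen N a) (Bgen N (a+3)) =
      (Bgen N (a+3) * Bgen N a) / Bgen N (a+4) :=
    st.c2' a (a+3) (a+4) (by linear_combination h3) (by linear_combination h3)
  have hv_m2g : bS (Bgen N (a+4)) (Bgen N (a+2)) = 0 :=
    st.s0 (a+4) (a+2) (fun h => n3 (by linear_combination -h)) (fun h => n1 (by linear_combination -h))
  have hv_hg : bS (Bgen N (a+3)) (Bgen N (a+2)) = -(Bgen N (a+2) * Bgen N (a+3)) :=
    st.s1' (a+3) (a+2) (by ring)
  have hinvC1 := st.C.inv_left (Bgen_ne_zero N (a+1))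
  have hinvS1 := st.S.inv_left (Bgen_ne_zero N (a+1))
  have hinvC2 := st.C.inv_left (Bgen_ne_zero N (a+4))
  have hinvS2 := st.S.inv_left (Bgen_ne_zero N (a+4))
  unfold MixJ
  simp only [hv_fg, hc_fg, hv_gh, hc_gh, hv_hf, hc_hf, hv_m1h, hv_fh, hc_gf, hv_gf,
    hc_fh, hv_m2g, hv_hg]
  simp only [div_eq_mul_inv, st.C.neg_left, st.S.neg_left, st.C.leib, st.S.leib,
    st.C.sub_left, st.S.sub_left, st.C.add, st.S.add, hinvC1, hinvS1, hinvC2, hinvS2,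
    st.C.zero_left, st.S.zero_left]
  simp only [hv_fg, hc_fg, hv_gh, hc_gh, hv_hf, hc_hf, hv_m1h, hv_fh, hc_gf, hv_gf,
    hc_fh, hv_m2g, hv_hg]
  have hb1 := Bgen_ne_zero N (a+1)
  have hb2 := Bgen_ne_zero N (a+4)
  field_simp
  ring

lemma caseC (st : Setup N bC bS) (a : ZMod N) :
    MixJ bC bS (Bgen N a) (Bgen N (a + 2)) (Bgen N (a + 3)) = 0 := by
  by_cases h3 : (3 : ZMod N) = -2
  · exact st.caseC5 a h3
  · exact st.caseCfar a h3


/-- Case D (generic): triple `(a, a+2, a+4)` with `4 ∉ {-1, -2}`. -/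
lemma caseDfar (st : Setup N bC bS) (a : ZMod N)
    (h4a : (4 : ZMod N) ≠ -1) (h4b : (4 : ZMod N) ≠ -2) :
    MixJ bC bS (Bgen N a) (Bgen N (a + 2)) (Bgen N (a + 4)) = 0 := by
  have hN := st.hN
  have n1 := zn1 hN; have n2 := zn2 hN; have n3 := zn3 hN; have n4 := zn4 hN
  have hv_fg : bS (Bgen N a) (Bgen N (a+2)) = 0 :=
    st.s0 a (a+2) (fun h => n1 (by linear_combination h)) (fun h => n3 (by linear_combination h))
  have hc_fg : bC (Bgen N a) (Bgen N (a+2)) =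
      -(Bgen N a * Bgen N (a+2)) / Bgen N (a+1) := st.c2 a (a+2) (a+1) rfl rfl
  have hv_gh : bS (Bgen N (a+2)) (Bgen N (a+4)) = 0 :=
    st.s0 (a+2) (a+4) (fun h => n1 (by linear_combination h)) (fun h => n3 (by linear_combination h))
  have hc_gh : bC (Bgen N (a+2)) (Bgen N (a+4)) =
      -(Bgen N (a+2) * Bgen N (a+4)) / Bgen N (a+3) := st.c2 (a+2) (a+4) (a+3) (by ring) (by ring)
  have hv_hf : bS (Bgen N (a+4)) (Bgen N a) = 0 :=
    st.s0 (a+4) a (fun h => h4a (by linear_combination -h)) (fun h => n3 (by linear_combination -h))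
  have hc_hf : bC (Bgen N (a+4)) (Bgen N a) = 0 :=
    st.c0 (a+4) a (fun h => h4a (by linear_combination -h)) (fun h => n3 (by linear_combination -h))
      (fun h => h4b (by linear_combination -h)) (fun h => n2 (by linear_combination -h))
  have hv_m1h : bS (Bgen N (a+1)) (Bgen N (a+4)) = 0 :=
    st.s0 (a+1) (a+4) (fun h => n2 (by linear_combination h)) (fun h => n4 (by linear_combination h))
  have hv_fh : bS (Bgen N a) (Bgen N (a+4)) = 0 :=
    st.s0 a (a+4) (fun h => n3 (by linear_combination h)) (fun h => h4a (by linear_combination h))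
  have hv_m2f : bS (Bgen N (a+3)) (Bgen N a) = 0 :=
    st.s0 (a+3) a (fun h => n4 (by linear_combination -h)) (fun h => n2 (by linear_combination -h))
  have hv_gf : bS (Bgen N (a+2)) (Bgen N a) = 0 :=
    st.s0 (a+2) a (fun h => n3 (by linear_combination -h)) (fun h => n1 (by linear_combination -h))
  have hinvC1 := st.C.inv_left (Bgen_ne_zero N (a+1))
  have hinvS1 := st.S.inv_left (Bgen_ne_zero N (a+1))
  have hinvC2 := st.C.inv_left (Bgen_ne_zero N (a+3))
  have hinvS2 := st.S.inv_left (Bgen_ne_zero N (a+3))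
  unfold MixJ
  simp only [hv_fg, hc_fg, hv_gh, hc_gh, hv_hf, hc_hf, hv_m1h, hv_fh, hv_m2f, hv_gf]
  simp only [div_eq_mul_inv, st.C.neg_left, st.S.neg_left, st.C.leib, st.S.leib,
    st.C.sub_left, st.S.sub_left, st.C.add, st.S.add, hinvC1, hinvS1, hinvC2, hinvS2,
    st.C.zero_left, st.S.zero_left]
  simp only [hv_fg, hc_fg, hv_gh, hc_gh, hv_hf, hc_hf, hv_m1h, hv_fh, hv_m2f, hv_gf]
  simp only [mul_zero, zero_mul, add_zero, zero_add, neg_zero, mul_neg, neg_mul]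
  

/-- Case D for `N = 5` (`4 = -1`): triple `(a, a+2, a+4)`. -/
lemma caseD5 (st : Setup N bC bS) (a : ZMod N) (h4 : (4 : ZMod N) = -1) :
    MixJ bC bS (Bgen N a) (Bgen N (a + 2)) (Bgen N (a + 4)) = 0 := by
  have hN := st.hN
  have n1 := zn1 hN; have n2 := zn2 hN; have n3 := zn3 hN; have n4 := zn4 hN
  have hv_fg : bS (Bgen N a) (Bgen N (a+2)) = 0 :=
    st.s0 a (a+2) (fun h => n1 (by linear_combination h)) (fun h => n3 (by linear_combination h))
  have hc_fg : bC (Bgen N a) (Bgen N (a+2)) =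
      -(Bgen N a * Bgen N (a+2)) / Bgen N (a+1) := st.c2 a (a+2) (a+1) rfl rfl
  have hv_gh : bS (Bgen N (a+2)) (Bgen N (a+4)) = 0 :=
    st.s0 (a+2) (a+4) (fun h => n1 (by linear_combination h)) (fun h => n3 (by linear_combination h))
  have hc_gh : bC (Bgen N (a+2)) (Bgen N (a+4)) =
      -(Bgen N (a+2) * Bgen N (a+4)) / Bgen N (a+3) := st.c2 (a+2) (a+4) (a+3) (by ring) (by ring)
  have hv_hf : bS (Bgen N (a+4)) (Bgen N a) = Bgen N (a+4) * Bgen N a :=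
    st.s1 (a+4) a (by linear_combination -h4)
  have hc_hf : bC (Bgen N (a+4)) (Bgen N a) =
      Bgen N (a+4) * Bgen N a - Bgen N (a+4) - Bgen N a :=
    st.c1 (a+4) a (by linear_combination -h4)
  have hv_m1h : bS (Bgen N (a+1)) (Bgen N (a+4)) = 0 :=
    st.s0 (a+1) (a+4) (fun h => n2 (by linear_combination h)) (fun h => n4 (by linear_combination h))
  have hv_fh : bS (Bgen N a) (Bgen N (a+4)) = -(Bgen N (a+4) * Bgen N a) :=
    st.s1' a (a+4) (by linear_combination h4)
  have hv_m2f : bS (Bgen N (a+3)) (Bgen N a) = 0 :=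
    st.s0 (a+3) a (fun h => n4 (by linear_combination -h)) (fun h => n2 (by linear_combination -h))
  have hv_gf : bS (Bgen N (a+2)) (Bgen N a) = 0 :=
    st.s0 (a+2) a (fun h => n3 (by linear_combination -h)) (fun h => n1 (by linear_combination -h))
  have hc_gf : bC (Bgen N (a+2)) (Bgen N a) =
      (Bgen N a * Bgen N (a+2)) / Bgen N (a+1) := st.c2' (a+2) a (a+1) (by ring) (by ring)
  have hc_hg : bC (Bgen N (a+4)) (Bgen N (a+2)) =
      (Bgen N (a+2) * Bgen N (a+4)) / Bgen N (a+3) := st.c2' (a+4) (a+2) (a+3) (by ring) (by ring)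
  have hv_hg : bS (Bgen N (a+4)) (Bgen N (a+2)) = 0 :=
    st.s0 (a+4) (a+2) (fun h => n3 (by linear_combination -h)) (fun h => n1 (by linear_combination -h))
  have hinvC1 := st.C.inv_left (Bgen_ne_zero N (a+1))
  have hinvS1 := st.S.inv_left (Bgen_ne_zero N (a+1))
  have hinvC2 := st.C.inv_left (Bgen_ne_zero N (a+3))
  have hinvS2 := st.S.inv_left (Bgen_ne_zero N (a+3))
  unfold MixJ
  simp only [hv_fg, hc_fg, hv_gh, hc_gh, hv_hf, hc_hf, hv_m1h, hv_fh, hv_m2f, hv_gf,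
    hc_gf, hc_hg, hv_hg]
  simp only [div_eq_mul_inv, st.C.neg_left, st.S.neg_left, st.C.leib, st.S.leib,
    st.C.sub_left, st.S.sub_left, st.C.add, st.S.add, hinvC1, hinvS1, hinvC2, hinvS2,
    st.C.zero_left, st.S.zero_left]
  simp only [hv_fg, hc_fg, hv_gh, hc_gh, hv_hf, hc_hf, hv_m1h, hv_fh, hv_m2f, hv_gf,
    hc_gf, hc_hg, hv_hg]
  have hb1 := Bgen_ne_zero N (a+1)
  have hb2 := Bgen_ne_zero N (a+3)
  field_simp
  ring

/-- Case D for `N = 6` (`4 = -2`): triple `(a, a+2, a+4)`. -/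
lemma caseD6 (st : Setup N bC bS) (a : ZMod N) (h4 : (4 : ZMod N) = -2) :
    MixJ bC bS (Bgen N a) (Bgen N (a + 2)) (Bgen N (a + 4)) = 0 := by
  have hN := st.hN
  have n1 := zn1 hN; have n2 := zn2 hN; have n3 := zn3 hN; have n4 := zn4 hN
  have hv_fg : bS (Bgen N a) (Bgen N (a+2)) = 0 :=
    st.s0 a (a+2) (fun h => n1 (by linear_combination h)) (fun h => n3 (by linear_combination h))
  have hc_fg : bC (Bgen N a) (Bgen N (a+2)) =
      -(Bgen N a * Bgen N (a+2)) / Bgen N (a+1) := st.c2 a (a+2) (a+1) rfl rfl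
  have hv_gh : bS (Bgen N (a+2)) (Bgen N (a+4)) = 0 :=
    st.s0 (a+2) (a+4) (fun h => n1 (by linear_combination h)) (fun h => n3 (by linear_combination h))
  have hc_gh : bC (Bgen N (a+2)) (Bgen N (a+4)) =
      -(Bgen N (a+2) * Bgen N (a+4)) / Bgen N (a+3) := st.c2 (a+2) (a+4) (a+3) (by ring) (by ring)
  have hv_hf : bS (Bgen N (a+4)) (Bgen N a) = 0 :=
    st.s0 (a+4) a (fun h => n1 (by linear_combination h4 + h)) (fun h => n3 (by linear_combination -h))
  have hc_hf : bC (Bgen N (a+4)) (Bgen N a) =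
      -(Bgen N (a+4) * Bgen N a) / Bgen N (a+5) :=
    st.c2 (a+4) a (a+5) (by linear_combination -h4) (by ring)
  have hv_m1h : bS (Bgen N (a+1)) (Bgen N (a+4)) = 0 :=
    st.s0 (a+1) (a+4) (fun h => n2 (by linear_combination h)) (fun h => n4 (by linear_combination h))
  have hv_fh : bS (Bgen N a) (Bgen N (a+4)) = 0 :=
    st.s0 a (a+4) (fun h => n3 (by linear_combination h)) (fun h => n1 (by linear_combination h4 - h))
  have hv_m2f : bS (Bgen N (a+3)) (Bgen N a) = 0 :=
    st.s0 (a+3) a (fun h => n4 (by linear_combination -h)) (fun h => n2 (by linear_combination -h))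
  have hv_gf : bS (Bgen N (a+2)) (Bgen N a) = 0 :=
    st.s0 (a+2) a (fun h => n3 (by linear_combination -h)) (fun h => n1 (by linear_combination -h))
  have hv_m3g : bS (Bgen N (a+5)) (Bgen N (a+2)) = 0 :=
    st.s0 (a+5) (a+2) (fun h => n4 (by linear_combination -h)) (fun h => n2 (by linear_combination -h))
  have hv_hg : bS (Bgen N (a+4)) (Bgen N (a+2)) = 0 :=
    st.s0 (a+4) (a+2) (fun h => n3 (by linear_combination -h)) (fun h => n1 (by linear_combination -h))
  have hinvC1 := st.C.inv_left (Bgen_ne_zero N (a+1))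
  have hinvS1 := st.S.inv_left (Bgen_ne_zero N (a+1))
  have hinvC2 := st.C.inv_left (Bgen_ne_zero N (a+3))
  have hinvS2 := st.S.inv_left (Bgen_ne_zero N (a+3))
  have hinvC3 := st.C.inv_left (Bgen_ne_zero N (a+5))
  have hinvS3 := st.S.inv_left (Bgen_ne_zero N (a+5))
  unfold MixJ
  simp only [hv_fg, hc_fg, hv_gh, hc_gh, hv_hf, hc_hf, hv_m1h, hv_fh, hv_m2f, hv_gf,
    hv_m3g, hv_hg]
  simp only [div_eq_mul_inv, st.C.neg_left, st.S.neg_left, st.C.leib, st.S.leib,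
    st.C.sub_left, st.S.sub_left, st.C.add, st.S.add, hinvC1, hinvS1, hinvC2, hinvS2,
    hinvC3, hinvS3, st.C.zero_left, st.S.zero_left]
  simp only [hv_fg, hc_fg, hv_gh, hc_gh, hv_hf, hc_hf, hv_m1h, hv_fh, hv_m2f, hv_gf,
    hv_m3g, hv_hg]
  simp only [mul_zero, zero_mul, add_zero, zero_add, neg_zero, mul_neg, neg_mul]
  

lemma caseD (st : Setup N bC bS) (a : ZMod N) :
    MixJ bC bS (Bgen N a) (Bgen N (a + 2)) (Bgen N (a + 4)) = 0 := by
  by_cases h4a : (4 : ZMod N) = -1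
  · exact st.caseD5 a h4a
  by_cases h4b : (4 : ZMod N) = -2
  · exact st.caseD6 a h4b
  exact st.caseDfar a h4a h4b


/-- If `c` is far (distance > 2) from both `a` and `b`, the mixed Jacobiator vanishes. -/
lemma Mfar (st : Setup N bC bS) (a b c : ZMod N)
    (h0 : c - a ≠ 0) (h1 : c - a ≠ 1) (h2 : c - a ≠ -1) (h3 : c - a ≠ 2) (h4 : c - a ≠ -2)
    (l0 : c - b ≠ 0) (l1 : c - b ≠ 1) (l2 : c - b ≠ -1) (l3 : c - b ≠ 2) (l4 : c - b ≠ -2) :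
    MixJ bC bS (Bgen N a) (Bgen N b) (Bgen N c) = 0 := by
  have hv_bc : bS (Bgen N b) (Bgen N c) = 0 :=
    st.s0 b c (fun h => l1 (by rw [h]; ring)) (fun h => l2 (by rw [h]; ring))
  have hc_bc : bC (Bgen N b) (Bgen N c) = 0 := st.c0 b c l1 l2 l3 l4
  have hv_ca : bS (Bgen N c) (Bgen N a) = 0 :=
    st.s0 c a (fun h => h2 (by linear_combination -h)) (fun h => h1 (by linear_combination -h))
  have hc_ca : bC (Bgen N c) (Bgen N a) = 0 :=
    st.c0 c a (fun h => h2 (by linear_combination -h)) (fun h => h1 (by linear_combination -h))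
      (fun h => h4 (by linear_combination -h)) (fun h => h3 (by linear_combination -h))
  have hv_ac : bS (Bgen N a) (Bgen N c) = 0 :=
    st.s0 a c (fun h => h1 (by rw [h]; ring)) (fun h => h2 (by rw [h]; ring))
  have hc_ac : bC (Bgen N a) (Bgen N c) = 0 := st.c0 a c h1 h2 h3 h4
  -- terms 3,4,5,6 vanish
  have t1 : bC (bS (Bgen N a) (Bgen N b)) (Bgen N c) = 0 := by
    rw [st.sgen a b, st.C.smul, st.C.leib, hc_bc, hc_ac, mul_zero, mul_zero, add_zero,
      smul_zero]
  have t2 : bS (bC (Bgen N a) (Bgen N b)) (Bgen N c) = 0 := by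
    by_cases hd1 : b - a = 1
    · have hb : b = a + 1 := by linear_combination hd1
      subst hb
      have hv_m : bS (Bgen N (a+1)) (Bgen N c) = 0 :=
        st.s0 (a+1) c (fun h => l1 (by rw [h]; ring)) (fun h => l2 (by rw [h]; ring))
      rw [st.c1 a (a+1) rfl, st.S.sub_left, st.S.sub_left, st.S.leib, hv_ac, hv_m]
      ring
    by_cases hd2 : b - a = 2
    · have hb : b = a + 2 := by linear_combination hd2
      subst hb
      have hv_m : bS (Bgen N (a+1)) (Bgen N c) = 0 :=
        st.s0 (a+1) c (fun h => h3 (by rw [h]; ring)) (fun h => h0 (by rw [h]; ring))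
      have hv_b : bS (Bgen N (a+2)) (Bgen N c) = 0 :=
        st.s0 (a+2) c (fun h => l1 (by rw [h]; ring)) (fun h => l2 (by rw [h]; ring))
      have hinvS := st.S.inv_left (Bgen_ne_zero N (a+1))
      rw [st.c2 a (a+2) (a+1) rfl rfl]
      simp only [div_eq_mul_inv, st.S.neg_left, st.S.leib, hinvS, hv_ac, hv_b, hv_m]
      ring
    by_cases hd3 : b - a = -1
    · have hb : b = a - 1 := by linear_combination hd3
      subst hb
      have hv_b : bS (Bgen N (a-1)) (Bgen N c) = 0 :=
        st.s0 (a-1) c (fun h => l1 (by rw [h]; ring)) (fun h => l2 (by rw [h]; ring))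
      rw [st.c1' a (a-1) rfl, st.S.neg_left, st.S.sub_left, st.S.sub_left, st.S.leib,
        hv_ac, hv_b]
      ring
    by_cases hd4 : b - a = -2
    · have hb : b = a - 2 := by linear_combination hd4
      subst hb
      have hv_m : bS (Bgen N (a-1)) (Bgen N c) = 0 :=
        st.s0 (a-1) c (fun h => h0 (by rw [h]; ring)) (fun h => h4 (by rw [h]; ring))
      have hv_b : bS (Bgen N (a-2)) (Bgen N c) = 0 :=
        st.s0 (a-2) c (fun h => l1 (by rw [h]; ring)) (fun h => l2 (by rw [h]; ring))
      have hinvS := st.S.inv_left (Bgen_ne_zero N (a-1))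
      rw [st.c2' a (a-2) (a-1) rfl rfl]
      simp only [div_eq_mul_inv, st.S.neg_left, st.S.leib, hinvS, hv_ac, hv_b, hv_m]
      ring
    · rw [st.c0 a b hd1 hd3 hd2 hd4, st.S.zero_left]
  unfold MixJ
  rw [t1, t2, hv_bc, hc_bc, hv_ca, hc_ca, st.C.zero_left, st.S.zero_left,
    st.C.zero_left, st.S.zero_left]
  ring


end Setup

lemma MixJ_swap13 {bC bS : RatF N → RatF N → RatF N} (hC : BD N bC) (hS : BD N bS)
    (f g h : RatF N) : MixJ bC bS f g h = - MixJ bC bS h g f := by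
  rw [MixJ_swap hC hS h g f, MixJ_cyc g h f, neg_neg]

namespace Setup

variable {bC bS : RatF N → RatF N → RatF N}

/-- The case where both `j - i` and `k - j` are small. -/
lemma Mclose (st : Setup N bC bS) (i j k : ZMod N) (hki : k ≠ i)
    (hp : j - i = 1 ∨ j - i = 2 ∨ j - i = -1 ∨ j - i = -2)
    (hq : k - j = 1 ∨ k - j = 2 ∨ k - j = -1 ∨ k - j = -2) :
    MixJ bC bS (Bgen N i) (Bgen N j) (Bgen N k) = 0 := by
  rcases hp with hp | hp | hp | hp <;> rcases hq with hq | hq | hq | hq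
  -- (1,1)
  · obtain rfl : j = i + 1 := by linear_combination hp
    obtain rfl : k = i + 2 := by linear_combination hq + hp
    exact st.caseA i
  -- (1,2)
  · obtain rfl : j = i + 1 := by linear_combination hp
    obtain rfl : k = i + 3 := by linear_combination hq + hp
    exact st.caseB i
  -- (1,-1) : k = i
  · exact absurd (by linear_combination hq + hp : k = i) hki
  -- (1,-2) : k = i - 1
  · obtain rfl : j = i + 1 := by linear_combination hp
    obtain rfl : k = i - 1 := by linear_combination hq + hp
    rw [MixJ_cyc]
    have h := st.caseA (i - 1)
    rw [show i - 1 + 1 = i from by ring, show i - 1 + 2 = i + 1 from by ring] at h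
    exact h
  -- (2,1)
  · obtain rfl : j = i + 2 := by linear_combination hp
    obtain rfl : k = i + 3 := by linear_combination hq + hp
    exact st.caseC i
  -- (2,2)
  · obtain rfl : j = i + 2 := by linear_combination hp
    obtain rfl : k = i + 4 := by linear_combination hq + hp
    exact st.caseD i
  -- (2,-1) : k = i + 1
  · obtain rfl : j = i + 2 := by linear_combination hp
    obtain rfl : k = i + 1 := by linear_combination hq + hp
    rw [MixJ_cyc, MixJ_swap st.C st.S, st.caseA i, neg_zero]
  -- (2,-2) : k = i
  · exact absurd (by linear_combination hq + hp : k = i) hki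
  -- (-1,1) : k = i
  · exact absurd (by linear_combination hq + hp : k = i) hki
  -- (-1,2) : k = i + 1
  · obtain rfl : j = i - 1 := by linear_combination hp
    obtain rfl : k = i + 1 := by linear_combination hq + hp
    rw [MixJ_cyc, MixJ_swap st.C st.S, MixJ_cyc]
    have h := st.caseA (i - 1)
    rw [show i - 1 + 1 = i from by ring, show i - 1 + 2 = i + 1 from by ring] at h
    rw [h, neg_zero]
  -- (-1,-1)
  · obtain rfl : j = i - 1 := by linear_combination hp
    obtain rfl : k = i - 2 := by linear_combination hq + hp
    rw [MixJ_swap13 st.C st.S]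
    have h := st.caseA (i - 2)
    rw [show i - 2 + 1 = i - 1 from by ring, show i - 2 + 2 = i from by ring] at h
    rw [h, neg_zero]
  -- (-1,-2)
  · obtain rfl : j = i - 1 := by linear_combination hp
    obtain rfl : k = i - 3 := by linear_combination hq + hp
    rw [MixJ_swap13 st.C st.S]
    have h := st.caseC (i - 3)
    rw [show i - 3 + 2 = i - 1 from by ring, show i - 3 + 3 = i from by ring] at h
    rw [h, neg_zero]
  -- (-2,1) : k = i - 1
  · obtain rfl : j = i - 2 := by linear_combination hp
    obtain rfl : k = i - 1 := by linear_combination hq + hp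
    rw [MixJ_cyc, MixJ_cyc]
    have h := st.caseA (i - 2)
    rw [show i - 2 + 1 = i - 1 from by ring, show i - 2 + 2 = i from by ring] at h
    exact h
  -- (-2,2) : k = i
  · exact absurd (by linear_combination hq + hp : k = i) hki
  -- (-2,-1)
  · obtain rfl : j = i - 2 := by linear_combination hp
    obtain rfl : k = i - 3 := by linear_combination hq + hp
    rw [MixJ_swap13 st.C st.S]
    have h := st.caseB (i - 3)
    rw [show i - 3 + 1 = i - 2 from by ring, show i - 3 + 3 = i from by ring] at h
    rw [h, neg_zero]
  -- (-2,-2)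
  · obtain rfl : j = i - 2 := by linear_combination hp
    obtain rfl : k = i - 4 := by linear_combination hq + hp
    rw [MixJ_swap13 st.C st.S]
    have h := st.caseD (i - 4)
    rw [show i - 4 + 2 = i - 2 from by ring, show i - 4 + 4 = i from by ring] at h
    rw [h, neg_zero]

/-- Classification of a difference. -/
lemma cls (d : ZMod N) :
    (d = 1 ∨ d = 2 ∨ d = -1 ∨ d = -2) ∨ (d ≠ 1 ∧ d ≠ 2 ∧ d ≠ -1 ∧ d ≠ -2) := by
  by_cases h1 : d = 1
  · exact Or.inl (Or.inl h1)
  by_cases h2 : d = 2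
  · exact Or.inl (Or.inr (Or.inl h2))
  by_cases h3 : d = -1
  · exact Or.inl (Or.inr (Or.inr (Or.inl h3)))
  by_cases h4 : d = -2
  · exact Or.inl (Or.inr (Or.inr (Or.inr h4)))
  exact Or.inr ⟨h1, h2, h3, h4⟩

/-- The mixed Jacobiator vanishes on all triples of generators. -/
lemma Mgen (st : Setup N bC bS) (i j k : ZMod N) :
    MixJ bC bS (Bgen N i) (Bgen N j) (Bgen N k) = 0 := by
  by_cases hij : j = i
  · subst hij; exact MixJ_eq12 st.C st.S _ _
  by_cases hjk : k = j
  · subst hjk; rw [MixJ_cyc, MixJ_cyc]; exact MixJ_eq12 st.C st.S _ _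
  by_cases hki : k = i
  · subst hki; rw [MixJ_cyc]; exact MixJ_eq12 st.C st.S _ _
  rcases cls (j - i) with hp | hp
  · rcases cls (k - j) with hq | hq
    · exact st.Mclose i j k hki hp hq
    · rcases cls (i - k) with hr | hr
      · rw [MixJ_cyc]
        exact st.Mclose k i j (fun h => hjk h.symm) hr hp
      · exact st.Mfar i j k
          (fun h => hki (by linear_combination h)) (fun h => hr.2.2.1 (by linear_combination -h))
          (fun h => hr.1 (by linear_combination -h)) (fun h => hr.2.2.2 (by linear_combination -h))
          (fun h => hr.2.1 (by linear_combination -h))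
          (fun h => hjk (by linear_combination h)) hq.1 hq.2.2.1 hq.2.1 hq.2.2.2
  · rcases cls (k - j) with hq | hq
    · rcases cls (i - k) with hr | hr
      · rw [MixJ_cyc, MixJ_cyc]
        exact st.Mclose j k i (fun h => hij h.symm) hq hr
      · rw [MixJ_cyc, MixJ_cyc]
        exact st.Mfar j k i
          (fun h => hij (by linear_combination -h)) (fun h => hp.2.2.1 (by linear_combination -h))
          (fun h => hp.1 (by linear_combination -h)) (fun h => hp.2.2.2 (by linear_combination -h))
          (fun h => hp.2.1 (by linear_combination -h))
          (fun h => hki (by linear_combination -h)) hr.1 hr.2.2.1 hr.2.1 hr.2.2.2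
    · rw [MixJ_cyc]
      exact st.Mfar k i j
        (fun h => hjk (by linear_combination -h)) (fun h => hq.2.2.1 (by linear_combination -h))
        (fun h => hq.1 (by linear_combination -h)) (fun h => hq.2.2.2 (by linear_combination -h))
        (fun h => hq.2.1 (by linear_combination -h))
        (fun h => hij (by linear_combination h)) hp.1 hp.2.2.1 hp.2.1 hp.2.2.2


/-- The mixed Jacobiator vanishes identically. -/
lemma Mzero (st : Setup N bC bS) (f g h : RatF N) : MixJ bC bS f g h = 0 := by
  -- first extend in the third slot
  have key3 : ∀ (i j : ZMod N) (z : RatF N), MixJ bC bS (Bgen N i) (Bgen N j) z = 0 := by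
    intro i j
    refine der_zero (fun z => MixJ bC bS (Bgen N i) (Bgen N j) z) ?_ ?_ ?_ ?_
    · intro x y
      rw [MixJ_cyc (Bgen N i) (Bgen N j) (x + y), MixJ_add1 st.C st.S,
        MixJ_cyc (Bgen N i) (Bgen N j) x, MixJ_cyc (Bgen N i) (Bgen N j) y]
    · intro c x
      rw [MixJ_cyc (Bgen N i) (Bgen N j) (c • x), MixJ_smul1 st.C st.S,
        MixJ_cyc (Bgen N i) (Bgen N j) x]
    · intro x y
      rw [MixJ_cyc (Bgen N i) (Bgen N j) (x * y), MixJ_mul1 st.C st.S,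
        MixJ_cyc (Bgen N i) (Bgen N j) x, MixJ_cyc (Bgen N i) (Bgen N j) y]
    · intro k
      exact st.Mgen i j k
  -- then in the second slot
  have key2 : ∀ (i : ZMod N) (z h' : RatF N), MixJ bC bS (Bgen N i) z h' = 0 := by
    intro i z h'
    revert z
    refine der_zero (fun z => MixJ bC bS (Bgen N i) z h') ?_ ?_ ?_ ?_
    · intro x y
      rw [MixJ_cyc (Bgen N i) (x + y) h', MixJ_cyc h' (Bgen N i) (x + y),
        MixJ_add1 st.C st.S,
        MixJ_cyc (Bgen N i) x h', MixJ_cyc h' (Bgen N i) x,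
        MixJ_cyc (Bgen N i) y h', MixJ_cyc h' (Bgen N i) y]
    · intro c x
      rw [MixJ_cyc (Bgen N i) (c • x) h', MixJ_cyc h' (Bgen N i) (c • x),
        MixJ_smul1 st.C st.S,
        MixJ_cyc (Bgen N i) x h', MixJ_cyc h' (Bgen N i) x]
    · intro x y
      rw [MixJ_cyc (Bgen N i) (x * y) h', MixJ_cyc h' (Bgen N i) (x * y),
        MixJ_mul1 st.C st.S,
        MixJ_cyc (Bgen N i) x h', MixJ_cyc h' (Bgen N i) x,
        MixJ_cyc (Bgen N i) y h', MixJ_cyc h' (Bgen N i) y]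
    · intro j
      exact key3 i j h'
  -- finally in the first slot
  revert f
  refine der_zero (fun f => MixJ bC bS f g h) ?_ ?_ ?_ ?_
  · intro x y; exact MixJ_add1 st.C st.S x y g h
  · intro c x; exact MixJ_smul1 st.C st.S c x g h
  · intro x y; exact MixJ_mul1 st.C st.S x y g h
  · intro i; exact key2 i g h

end Setup
end LambdaAux

set_option maxHeartbeats 1000000 in
open LambdaAux in
/-- If the brackets `{·,·}_{C2N}` and `{·,·}_{S2}` each satisfy the Jacobi
identity, then for every `λ ∈ ℝ` the bracket
`{f,g}_λ := {f,g}_{C2N} + λ·{f,g}_{S2}` satisfies the Jacobi identity. -/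
theorem lambda_bracket_jacobi (N : ℕ) (hN : 5 ≤ N)
    (bC bS : RatF N → RatF N → RatF N)
    -- `{·,·}_{C2N}` is ℝ-bilinear, antisymmetric, and a derivation in each argument
    (hC_add : ∀ x y z : RatF N, bC (x + y) z = bC x z + bC y z)
    (hC_smul : ∀ (c : ℝ) (x y : RatF N), bC (c • x) y = c • bC x y)
    (hC_anti : ∀ x y : RatF N, bC x y = - bC y x)
    (hC_leib : ∀ x y z : RatF N, bC (x * y) z = x * bC y z + y * bC x z)
    -- values of `{·,·}_{C2N}` on the generators
    (hC_gen1 : ∀ k : ZMod N,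
      bC (Bgen N k) (Bgen N (k + 1)) =
        Bgen N k * Bgen N (k + 1) - Bgen N k - Bgen N (k + 1))
    (hC_gen2 : ∀ k : ZMod N,
      bC (Bgen N k) (Bgen N (k + 2)) =
        - (Bgen N k * Bgen N (k + 2)) / Bgen N (k + 1))
    (hC_gen0 : ∀ i j : ZMod N,
      j - i ≠ 1 → j - i ≠ -1 → j - i ≠ 2 → j - i ≠ -2 → bC (Bgen N i) (Bgen N j) = 0)
    -- `{·,·}_{S2}` is ℝ-bilinear, antisymmetric, and a derivation in each argument
    (hS_add : ∀ x y z : RatF N, bS (x + y) z = bS x z + bS y z)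
    (hS_smul : ∀ (c : ℝ) (x y : RatF N), bS (c • x) y = c • bS x y)
    (hS_anti : ∀ x y : RatF N, bS x y = - bS y x)
    (hS_leib : ∀ x y z : RatF N, bS (x * y) z = x * bS y z + y * bS x z)
    -- values of `{·,·}_{S2}` on the generators
    (hS_gen : ∀ i j : ZMod N,
      bS (Bgen N i) (Bgen N j) =
        ((if i + 1 = j then (1 : ℝ) else 0) - (if i - 1 = j then (1 : ℝ) else 0)) •
          (Bgen N i * Bgen N j))
    -- each bracket satisfies the Jacobi identity
    (hC_jac : ∀ x y z : RatF N, bC (bC x y) z + bC (bC y z) x + bC (bC z x) y = 0)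
    (hS_jac : ∀ x y z : RatF N, bS (bS x y) z + bS (bS y z) x + bS (bS z x) y = 0) :
    ∀ l : ℝ, ∀ f g h : RatF N,
      (bC (bC f g + l • bS f g) h + l • bS (bC f g + l • bS f g) h) +
      (bC (bC g h + l • bS g h) f + l • bS (bC g h + l • bS g h) f) +
      (bC (bC h f + l • bS h f) g + l • bS (bC h f + l • bS h f) g) = 0 := by
  intro l f g h
  have st : Setup N bC bS :=
    ⟨hN, ⟨hC_add, hC_smul, hC_anti, hC_leib⟩, ⟨hS_add, hS_smul, hS_anti, hS_leib⟩,
      hC_gen1, hC_gen2, hC_gen0, hS_gen⟩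
  have hM := st.Mzero f g h
  unfold MixJ at hM
  simp only [hC_add, hC_smul, hS_add, hS_smul]
  simp only [Algebra.smul_def] at hM ⊢
  linear_combination hC_jac f g h + algebraMap ℝ (RatF N) l * hM +
    algebraMap ℝ (RatF N) l * (algebraMap ℝ (RatF N) l * hS_jac f g h)
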